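/- For all integers K ≥ 2 and t ≥ 2: C((K−1)t² + 2(K−1)t − 1, (K−1)t) ≥ (K−1) · C((K−1)t(t+1) − 1, t), where C(·,·) denotes the ordinary binomial coefficient. -/
import Mathlib

lemma choose_mono_k (n : ℕ) : ∀ {a b : ℕ}, a ≤ b → 2 * b ≤ n →
    n.choose a ≤ n.choose b := by
  intro a b hab hb
  induction b with
  | zero => simp [Nat.le_zero.mp hab]
  | succ b ih =>
    rcases Nat.lt_or_ge a (b + 1) with h | h
    · have h1 := ih (Nat.lt_succ_iff.mp h) (by omega)
      exact h1.trans (Nat.choose_le_succ_of_lt_half_left (by omega))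
    · have : a = b + 1 := le_antisymm hab h
      simp [this]

/-- for all integers `K ≥ 2` and `t ≥ 2`,
`C((K−1)t² + 2(K−1)t − 1, (K−1)t) ≥ (K−1) · C((K−1)t(t+1) − 1, t)`. -/
theorem binomial_inequality (K t : ℕ) (hK : 2 ≤ K) (ht : 2 ≤ t) :
    (K - 1) * Nat.choose ((K - 1) * t * (t + 1) - 1) t ≤
      Nat.choose ((K - 1) * t ^ 2 + 2 * (K - 1) * t - 1) ((K - 1) * t) := by
  set m := K - 1 with hm
  have hm1 : 1 ≤ m := by omega
  have hnle : m * t * (t + 1) ≤ m * t ^ 2 + 2 * m * t := by nlinarith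
  have hn12 : m * t * (t + 1) - 1 ≤ m * t ^ 2 + 2 * m * t - 1 :=
    Nat.sub_le_sub_right hnle 1
  rcases Nat.lt_or_ge m 2 with hlt | h2
  · -- m = 1
    have hm' : m = 1 := by omega
    simp only [hm', one_mul]
    simpa using Nat.choose_mono t (by simpa [hm'] using hn12)
  · -- m ≥ 2
    set n₂ := m * t * (t + 1) - 1 with hn2
    set n₁ := m * t ^ 2 + 2 * m * t - 1 with hn1
    -- write m*t = c+1
    have hmt2 : 2 * t ≤ m * t := Nat.mul_le_mul_right t h2
    have hm2t : m * 2 ≤ m * t := Nat.mul_le_mul_left m ht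
    obtain ⟨c, hc⟩ : ∃ c, m * t = c + 1 := ⟨m * t - 1, by omega⟩
    have hct : c ≤ c * t := Nat.le_mul_of_pos_right c (by omega)
    have hn2eq : n₂ = c * t + c + t := by
      have e : m * t * (t + 1) = (c + 1) * (t + 1) := by rw [hc]
      have e2 : (c + 1) * (t + 1) = c * t + c + t + 1 := by ring
      omega
    have hn1eq : n₁ = c * t + t + 2 * c + 1 := by
      have e : m * t ^ 2 + 2 * m * t = (m * t) * t + 2 * (m * t) := by ring
      rw [hc] at e
      have e2 : (c + 1) * t + 2 * (c + 1) = c * t + t + 2 * c + 2 := by ring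
      omega
    have key : (n₂.choose (t + 1)) * (t + 1) = n₂.choose t * (n₂ - t) :=
      Nat.choose_succ_right_eq n₂ t
    have hsub : n₂ - t = c * (t + 1) := by
      have e : c * (t + 1) = c * t + c := by ring
      omega
    have hstep1 : n₂.choose (t + 1) = n₂.choose t * c := by
      rw [hsub] at key
      have e : n₂.choose t * (c * (t + 1)) = (n₂.choose t * c) * (t + 1) := by ring
      rw [e] at key
      exact Nat.eq_of_mul_eq_mul_right (by omega) key
    have h1 : m * n₂.choose t ≤ n₂.choose (t + 1) := by
      rw [hstep1]
      have hmc : m ≤ c := by omega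
      calc m * n₂.choose t = n₂.choose t * m := by ring
        _ ≤ n₂.choose t * c := Nat.mul_le_mul_left _ hmc
    have h2' : n₂.choose (t + 1) ≤ n₁.choose (t + 1) := Nat.choose_mono _ hn12
    have h3 : n₁.choose (t + 1) ≤ n₁.choose (m * t) := by
      apply choose_mono_k
      · omega
      · omega
    exact le_trans h1 (le_trans h2' h3)
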